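/- Let A be the infinitesimal generator of a C₀-semigroup (T(t))_{t≥0} on a complex Banach space X satisfying ‖T(t)‖ ≤ M for all t ≥ 0, where M ≥ 1, and suppose there exists a constant C > 0 such that ‖R(r+is,A)‖ ≤ C/|s| for all r > 0 and all real s ≠ 0. Then the open sector Σ_{π/2+δ} with δ = arctan(1/C) is contained in the resolvent set ρ(A), and for every q ∈ (0,1) and every λ ∈ ℂ with |arg λ| ≤ π/2 + arctan(q/C) one has ‖λ R(λ,A)‖ ≤ √(C² + M²)/(1−q). -/

import Mathlib

open Filter Topology

universe u

/-- A strongly continuous one-parameter semigroup of bounded operators on a complex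
Banach space: `T 0 = I`, `T (s+t) = T s ∘ T t` for nonnegative times, and
`T t x → x` as `t ↓ 0`. -/
def IsC0Semigroup {X : Type u} [NormedAddCommGroup X] [NormedSpace ℂ X]
    (T : ℝ → X →L[ℂ] X) : Prop :=
  T 0 = 1 ∧ (∀ s t : ℝ, 0 ≤ s → 0 ≤ t → T (s + t) = (T s).comp (T t)) ∧
    ∀ x : X, Tendsto (fun t => T t x) (nhdsWithin 0 (Set.Ioi 0)) (nhds x)

/-- `A` (with domain `dom`) is the infinitesimal generator of the semigroup `T`:
`dom` is exactly the set of `x` for which `(T h x - x)/h` converges as `h ↓ 0`,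
and for `x ∈ dom` the limit is `A x`. -/
def IsGenerator {X : Type u} [NormedAddCommGroup X] [NormedSpace ℂ X]
    (T : ℝ → X →L[ℂ] X) (dom : Set X) (A : X → X) : Prop :=
  (∀ x : X, x ∈ dom ↔ ∃ y : X,
      Tendsto (fun h : ℝ => (h : ℂ)⁻¹ • (T h x - x)) (nhdsWithin 0 (Set.Ioi 0)) (nhds y)) ∧
    ∀ x ∈ dom,
      Tendsto (fun h : ℝ => (h : ℂ)⁻¹ • (T h x - x)) (nhdsWithin 0 (Set.Ioi 0)) (nhds (A x))

/-- `R` is the resolvent of the (unbounded) operator `A` with domain `dom`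
at the point `lam`, i.e. the (bounded) two-sided inverse of `lam - A`. -/
def IsResolventAt {X : Type u} [NormedAddCommGroup X] [NormedSpace ℂ X]
    (dom : Set X) (A : X → X) (lam : ℂ) (R : X →L[ℂ] X) : Prop :=
  (∀ y : X, R y ∈ dom) ∧ (∀ y : X, lam • R y - A (R y) = y) ∧
    ∀ x ∈ dom, R (lam • x - A x) = x

set_option linter.unusedSectionVars false
set_option linter.unusedTactic false

open MeasureTheory Set

section Aux

variable {X : Type u} [NormedAddCommGroup X] [NormedSpace ℂ X] [CompleteSpace X]
variable {T : ℝ → X →L[ℂ] X} {M : ℝ}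

lemma tendsto_Ici (hT : IsC0Semigroup T) (x : X) :
    Tendsto (fun t => T t x) (nhdsWithin 0 (Set.Ici 0)) (nhds x) := by
  have h0 : (Set.Ici (0:ℝ)) = {0} ∪ Set.Ioi 0 := by
    ext t; simp [le_iff_lt_or_eq, or_comm, eq_comm]
  rw [h0, nhdsWithin_union]
  refine Tendsto.sup ?_ (hT.2.2 x)
  rw [nhdsWithin_singleton]
  have : Tendsto (fun t => T t x) (pure (0:ℝ)) (nhds (T 0 x)) := tendsto_pure_nhds _ 0
  simpa [hT.1] using this

lemma norm_T_sub_T (hT : IsC0Semigroup T) (hTM : ∀ t : ℝ, 0 ≤ t → ‖T t‖ ≤ M)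
    (x : X) {t t₀ : ℝ} (ht : 0 ≤ t) (ht₀ : 0 ≤ t₀) :
    ‖T t x - T t₀ x‖ ≤ M * ‖T (|t - t₀|) x - x‖ := by
  have key : ∀ a b : ℝ, 0 ≤ a → 0 ≤ b → b ≤ a →
      ‖T a x - T b x‖ ≤ M * ‖T (|a - b|) x - x‖ := by
    intro a b ha hb hba
    have hcomp := hT.2.1 b (a - b) hb (by linarith)
    have hab : b + (a - b) = a := by ring
    rw [hab] at hcomp
    have h1 : T a x = T b (T (a - b) x) := by rw [hcomp]; rfl
    have h2 : T a x - T b x = T b (T (a - b) x - x) := by rw [h1, map_sub]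
    rw [h2, abs_of_nonneg (by linarith : (0:ℝ) ≤ a - b)]
    calc ‖T b (T (a-b) x - x)‖ ≤ ‖T b‖ * ‖T (a-b) x - x‖ := (T b).le_opNorm _
      _ ≤ M * ‖T (a-b) x - x‖ :=
        mul_le_mul_of_nonneg_right (hTM b hb) (norm_nonneg _)
  rcases le_total t₀ t with h | h
  · exact key t t₀ ht ht₀ h
  · rw [norm_sub_rev, abs_sub_comm]
    exact key t₀ t ht₀ ht h

lemma continuousOn_T (hT : IsC0Semigroup T) (hTM : ∀ t : ℝ, 0 ≤ t → ‖T t‖ ≤ M)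
    (x : X) : ContinuousOn (fun t => T t x) (Set.Ici 0) := by
  intro t₀ ht₀
  have h1 : Tendsto (fun t : ℝ => |t - t₀|) (nhdsWithin t₀ (Set.Ici 0))
      (nhdsWithin 0 (Set.Ici 0)) := by
    apply tendsto_nhdsWithin_of_tendsto_nhds_of_eventually_within
    · have : Tendsto (fun t : ℝ => |t - t₀|) (nhds t₀) (nhds (|t₀ - t₀|)) :=
        ((continuous_id.sub continuous_const).abs).tendsto t₀
      simpa using this.mono_left nhdsWithin_le_nhds
    · exact Eventually.of_forall fun t => Set.mem_Ici.2 (abs_nonneg _)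
  have h2 : Tendsto (fun t => T (|t - t₀|) x - x) (nhdsWithin t₀ (Set.Ici 0)) (nhds 0) := by
    have := (tendsto_Ici hT x).comp h1
    simpa using this.sub_const x
  have h3 : Tendsto (fun t => ‖T t x - T t₀ x‖) (nhdsWithin t₀ (Set.Ici 0)) (nhds 0) := by
    apply squeeze_zero' (Eventually.of_forall fun t => norm_nonneg _)
    · filter_upwards [self_mem_nhdsWithin] with t ht
      exact norm_T_sub_T hT hTM x ht ht₀
    · simpa using (h2.norm.const_mul M)
  exact tendsto_iff_norm_sub_tendsto_zero.2 h3

lemma laplace (hT : IsC0Semigroup T) (hM : 1 ≤ M) (hTM : ∀ t : ℝ, 0 ≤ t → ‖T t‖ ≤ M)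
    (dom : Set X) (A : X → X) (hA : IsGenerator T dom A) (lam : ℂ) (hre : 0 < lam.re) :
    ∃ R : X →L[ℂ] X, IsResolventAt dom A lam R ∧ ‖R‖ ≤ M / lam.re := by
  have hM0 : (0:ℝ) ≤ M := le_trans zero_le_one hM
  set f : X → ℝ → X := fun x t => Complex.exp (-(lam * t)) • T t x with hf
  have hnormexp : ∀ t : ℝ, ‖Complex.exp (-(lam * t))‖ = Real.exp (-(lam.re * t)) := by
    intro t
    rw [Complex.norm_exp]
    congr 1
    simp [Complex.mul_re]
  have hnorm_f : ∀ (x : X), ∀ t ∈ Ioi (0:ℝ), ‖f x t‖ ≤ M * ‖x‖ * Real.exp (-(lam.re * t)) := by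
    intro x t ht
    rw [hf, norm_smul, hnormexp]
    calc Real.exp (-(lam.re * t)) * ‖T t x‖ ≤ Real.exp (-(lam.re * t)) * (M * ‖x‖) := by
          apply mul_le_mul_of_nonneg_left _ (Real.exp_nonneg _)
          calc ‖T t x‖ ≤ ‖T t‖ * ‖x‖ := (T t).le_opNorm x
            _ ≤ M * ‖x‖ := mul_le_mul_of_nonneg_right (hTM t (le_of_lt ht)) (norm_nonneg x)
      _ = M * ‖x‖ * Real.exp (-(lam.re * t)) := by ring
  have hcont_f : ∀ x : X, ContinuousOn (f x) (Ioi 0) := by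
    intro x
    apply ContinuousOn.smul
    · exact (Complex.continuous_exp.comp
        (continuous_const.mul Complex.continuous_ofReal).neg).continuousOn
    · exact (continuousOn_T hT hTM x).mono Ioi_subset_Ici_self
  have hgint : IntegrableOn (fun t => Real.exp (-(lam.re * t))) (Ioi (0:ℝ)) := by
    have := exp_neg_integrableOn_Ioi 0 hre
    simpa [neg_mul] using this
  have hint : ∀ x : X, IntegrableOn (f x) (Ioi 0) := by
    intro x
    apply Integrable.mono' (hgint.const_mul (M * ‖x‖))
    · exact (hcont_f x).aestronglyMeasurable measurableSet_Ioi
    · exact (ae_restrict_iff' measurableSet_Ioi).2 (ae_of_all _ (hnorm_f x))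
  have hint_Ioi : ∀ (x : X), ∀ h : ℝ, 0 ≤ h → IntegrableOn (f x) (Ioi h) := fun x h hh =>
    (hint x).mono_set (Ioi_subset_Ioi hh)
  have hint_Ioc : ∀ (x : X), ∀ h : ℝ, IntegrableOn (f x) (Ioc 0 h) := fun x h =>
    (hint x).mono_set Ioc_subset_Ioi_self
  have hexpint : (∫ t in Ioi (0:ℝ), Real.exp (-(lam.re * t))) = (lam.re)⁻¹ := by
    have h1 := integral_comp_mul_left_Ioi (fun y => Real.exp (-y)) 0 hre
    rw [mul_zero] at h1
    rw [show (fun t : ℝ => Real.exp (-(lam.re * t))) = (fun t : ℝ => Real.exp (-(lam.re * t))) from rfl]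
    calc (∫ t in Ioi (0:ℝ), Real.exp (-(lam.re * t))) = lam.re⁻¹ • ∫ x in Ioi (0:ℝ), Real.exp (-x) := h1
      _ = lam.re⁻¹ := by rw [integral_exp_neg_Ioi]; simp
  set Rl : X →ₗ[ℂ] X :=
    { toFun := fun x => ∫ t in Ioi (0:ℝ), f x t
      map_add' := by
        intro x y
        rw [← integral_add (hint x) (hint y)]
        apply setIntegral_congr_fun measurableSet_Ioi
        intro t _
        simp [hf, smul_add]
      map_smul' := by
        intro c x
        rw [← integral_smul]
        apply setIntegral_congr_fun measurableSet_Ioi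
        intro t _
        simp only [hf, RingHom.id_apply]
        rw [(T t).map_smul, smul_comm] } with hRl
  have hRlbound : ∀ x : X, ‖Rl x‖ ≤ M / lam.re * ‖x‖ := by
    intro x
    have h1 : ‖Rl x‖ ≤ ∫ t in Ioi (0:ℝ), M * ‖x‖ * Real.exp (-(lam.re * t)) := by
      apply norm_integral_le_of_norm_le (hgint.const_mul (M * ‖x‖))
      exact (ae_restrict_iff' measurableSet_Ioi).2 (ae_of_all _ (hnorm_f x))
    rw [integral_const_mul, hexpint] at h1
    calc ‖Rl x‖ ≤ M * ‖x‖ * lam.re⁻¹ := h1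
      _ = M / lam.re * ‖x‖ := by ring
  set R : X →L[ℂ] X := Rl.mkContinuous (M / lam.re) hRlbound with hR
  have hRapp : ∀ x : X, R x = ∫ t in Ioi (0:ℝ), f x t := fun x => rfl
  have hcomm : ∀ h : ℝ, 0 ≤ h → ∀ x : X, R (T h x) = T h (R x) := by
    intro h hh x
    rw [hRapp, hRapp, ← (T h).integral_comp_comm (hint x)]
    apply setIntegral_congr_fun measurableSet_Ioi
    intro t ht
    simp only [hf]
    rw [(T h).map_smul]
    congr 1
    have h1 : T (t + h) = (T t).comp (T h) := hT.2.1 t h (le_of_lt ht) hh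
    have h2 : T (h + t) = (T h).comp (T t) := hT.2.1 h t hh (le_of_lt ht)
    calc T t (T h x) = T (t + h) x := by rw [h1]; rfl
      _ = T (h + t) x := by rw [add_comm]
      _ = T h (T t x) := by rw [h2]; rfl
  have hkey : ∀ x : X, R x ∈ dom ∧ A (R x) = lam • R x - x := by
    intro x
    set I : ℝ → X := fun h => ∫ t in Ioi h, f x t with hI
    set J : ℝ → X := fun h => ∫ t in Ioc 0 h, f x t with hJ
    have hsplit : ∀ h : ℝ, 0 ≤ h → R x = J h + I h := by
      intro h hh
      rw [hRapp, hI, hJ, ← setIntegral_union (Ioc_disjoint_Ioi le_rfl) measurableSet_Ioi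
        (hint_Ioc x h) (hint_Ioi x h hh), Ioc_union_Ioi_eq_Ioi hh]
    have hTh : ∀ h : ℝ, 0 < h → T h (R x) = Complex.exp (lam * h) • I h := by
      intro h hh
      have e1 : T h (R x) = ∫ t in Ioi (0:ℝ), Complex.exp (-(lam * t)) • T (t + h) x := by
        rw [hRapp, ← (T h).integral_comp_comm (hint x)]
        apply setIntegral_congr_fun measurableSet_Ioi
        intro t ht
        simp only [hf]
        rw [(T h).map_smul]
        congr 1
        have h2 : T (h + t) = (T h).comp (T t) := hT.2.1 h t hh.le (le_of_lt ht)
        calc T h (T t x) = T (h + t) x := by rw [h2]; rfl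
          _ = T (t + h) x := by rw [add_comm]
      have e2 : (∫ u in Ioi (0:ℝ), (fun s : ℝ => Complex.exp (-(lam * ((s:ℂ) - (h:ℂ)))) • T s x) (u + h))
          = ∫ s in Ioi h, Complex.exp (-(lam * ((s:ℂ) - (h:ℂ)))) • T s x := by
        have hmp := measurePreserving_add_right (volume : Measure ℝ) h
        have hme : MeasurableEmbedding (fun u : ℝ => u + h) :=
          (MeasurableEquiv.addRight h).measurableEmbedding
        have := hmp.setIntegral_preimage_emb hme
          (fun s : ℝ => Complex.exp (-(lam * ((s:ℂ) - (h:ℂ)))) • T s x) (Ioi h)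
        rwa [preimage_add_const_Ioi, sub_self] at this
      have e3 : (∫ t in Ioi (0:ℝ), Complex.exp (-(lam * t)) • T (t + h) x)
          = ∫ s in Ioi h, Complex.exp (-(lam * ((s:ℂ) - (h:ℂ)))) • T s x := by
        rw [← e2]
        apply setIntegral_congr_fun measurableSet_Ioi
        intro t _
        simp only
        congr 2
        push_cast
        ring
      have e4 : (∫ s in Ioi h, Complex.exp (-(lam * ((s:ℂ) - (h:ℂ)))) • T s x)
          = Complex.exp (lam * h) • I h := by
        rw [hI, ← integral_smul]
        apply setIntegral_congr_fun measurableSet_Ioi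
        intro s _
        simp only [hf, smul_smul, ← Complex.exp_add]
        congr 2
        push_cast
        ring
      rw [e1, e3, e4]
    have hJbound : ∀ h : ℝ, 0 < h → ‖J h‖ ≤ M * ‖x‖ * h := by
      intro h hh
      have hb : ∀ t ∈ Ioc (0:ℝ) h, ‖f x t‖ ≤ M * ‖x‖ := by
        intro t ht
        refine le_trans (hnorm_f x t ht.1) ?_
        have : Real.exp (-(lam.re * t)) ≤ 1 := by
          apply Real.exp_le_one_iff.2
          have := mul_pos hre ht.1
          linarith
        nlinarith [norm_nonneg x, this, mul_nonneg hM0 (norm_nonneg x)]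
      have := norm_setIntegral_le_of_norm_le_const (C := M * ‖x‖)
        (by rw [Real.volume_Ioc]; exact ENNReal.ofReal_lt_top) hb
      rw [Real.volume_real_Ioc_of_le (by linarith)] at this
      simpa [hJ] using this
    have hJ0 : Tendsto J (nhdsWithin 0 (Ioi 0)) (nhds 0) := by
      rw [tendsto_zero_iff_norm_tendsto_zero]
      apply squeeze_zero' (Eventually.of_forall fun h => norm_nonneg _)
      · filter_upwards [self_mem_nhdsWithin] with h hh
        exact hJbound h hh
      · have : Tendsto (fun h : ℝ => M * ‖x‖ * h) (nhdsWithin 0 (Ioi 0)) (nhds (M * ‖x‖ * 0)) :=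
          ((continuous_const.mul continuous_id).tendsto 0).mono_left nhdsWithin_le_nhds
        simpa using this
    have hItend : Tendsto I (nhdsWithin 0 (Ioi 0)) (nhds (R x)) := by
      have h1 : Tendsto (fun h => R x - J h) (nhdsWithin 0 (Ioi 0)) (nhds (R x - 0)) :=
        tendsto_const_nhds.sub hJ0
      rw [sub_zero] at h1
      apply h1.congr'
      filter_upwards [self_mem_nhdsWithin] with h hh
      have := hsplit h (le_of_lt hh)
      rw [this]; abel
    have hphi : Tendsto (fun h : ℝ => ((h:ℂ))⁻¹ * (Complex.exp (lam * h) - 1))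
        (nhdsWithin 0 (Ioi 0)) (nhds lam) := by
      have h1 : HasDerivAt (fun t : ℝ => ((t : ℂ))) 1 0 := by
        simpa using (hasDerivAt_id (0:ℝ)).ofReal_comp
      have h2 : HasDerivAt (fun t : ℝ => lam * (t:ℂ)) lam 0 := by
        simpa using h1.const_mul lam
      have h3 : HasDerivAt (fun t : ℝ => Complex.exp (lam * (t:ℂ))) lam 0 := by
        simpa using h2.cexp
      have h4 := hasDerivAt_iff_tendsto_slope.1 h3
      have h5 : Tendsto (slope (fun t : ℝ => Complex.exp (lam * (t:ℂ))) 0)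
          (nhdsWithin 0 (Ioi 0)) (nhds lam) :=
        h4.mono_left (nhdsWithin_mono 0 (fun t ht => ne_of_gt ht))
      apply h5.congr
      intro h
      rw [slope_def_module, Complex.real_smul]
      simp only [Complex.ofReal_zero, mul_zero, Complex.exp_zero, sub_zero,
        Complex.ofReal_inv]
    have hf0 : Tendsto (fun t : ℝ => f x t) (nhdsWithin 0 (Ioi 0)) (nhds x) := by
      have hc : Tendsto (fun t : ℝ => Complex.exp (-(lam * t))) (nhdsWithin 0 (Ioi 0))
          (nhds 1) := by
        have : Continuous (fun t : ℝ => Complex.exp (-(lam * t))) :=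
          Complex.continuous_exp.comp (continuous_const.mul Complex.continuous_ofReal).neg
        have h0 := (this.tendsto 0).mono_left (nhdsWithin_le_nhds (s := Ioi 0))
        simpa using h0
      have := hc.smul (hT.2.2 x)
      simpa [hf] using this
    have hpsi : Tendsto (fun h : ℝ => ((h:ℂ))⁻¹ • J h) (nhdsWithin 0 (Ioi 0)) (nhds x) := by
      rw [Metric.tendsto_nhdsWithin_nhds]
      intro ε hε
      obtain ⟨δ, hδ, hδ'⟩ := Metric.tendsto_nhdsWithin_nhds.1 hf0 (ε/2) (half_pos hε)
      refine ⟨δ, hδ, ?_⟩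
      intro h hh hdist
      have hhpos : (0:ℝ) < h := hh
      have hconst : IntegrableOn (fun _ : ℝ => x) (Ioc 0 h) :=
        integrableOn_const (by rw [Real.volume_Ioc]; exact ENNReal.ofReal_ne_top)
      have hkey2 : J h - (h:ℂ) • x = ∫ t in Ioc (0:ℝ) h, (f x t - x) := by
        rw [integral_sub (hint_Ioc x h) hconst]
        rw [setIntegral_const, Real.volume_real_Ioc_of_le (le_of_lt hhpos), sub_zero]
        congr 1
      have hb2 : ‖∫ t in Ioc (0:ℝ) h, (f x t - x)‖ ≤ (ε/2) * h := by
        have hball : ∀ t ∈ Ioc (0:ℝ) h, ‖f x t - x‖ ≤ ε/2 := by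
          intro t ht
          have h1 : dist (f x t) x < ε/2 := by
            apply hδ' ht.1
            rw [Real.dist_eq, sub_zero, abs_of_pos ht.1]
            calc t ≤ h := ht.2
              _ < δ := by rwa [Real.dist_eq, sub_zero, abs_of_pos hhpos] at hdist
          rw [dist_eq_norm] at h1
          exact le_of_lt h1
        have := norm_setIntegral_le_of_norm_le_const (C := ε/2)
          (by rw [Real.volume_Ioc]; exact ENNReal.ofReal_lt_top) hball
        rwa [Real.volume_real_Ioc_of_le (le_of_lt hhpos), sub_zero] at this
      rw [dist_eq_norm]
      have heq : ((h:ℂ))⁻¹ • J h - x = ((h:ℂ))⁻¹ • (J h - (h:ℂ) • x) := by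
        rw [smul_sub, smul_smul, inv_mul_cancel₀ (by exact_mod_cast ne_of_gt hhpos), one_smul]
      rw [heq, hkey2]
      rw [norm_smul]
      have hn : ‖((h:ℂ))⁻¹‖ = h⁻¹ := by
        rw [norm_inv, Complex.norm_real, Real.norm_eq_abs, abs_of_pos hhpos]
      rw [hn]
      calc h⁻¹ * ‖∫ t in Ioc (0:ℝ) h, (f x t - x)‖ ≤ h⁻¹ * ((ε/2) * h) := by
            apply mul_le_mul_of_nonneg_left hb2 (le_of_lt (inv_pos.2 hhpos))
        _ = ε/2 := by field_simp
        _ < ε := by linarith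
    have hIdent : ∀ h : ℝ, 0 < h → ((h:ℂ))⁻¹ • (T h (R x) - R x)
        = (((h:ℂ))⁻¹ * (Complex.exp (lam * h) - 1)) • I h - ((h:ℂ))⁻¹ • J h := by
      intro h hh
      rw [hTh h hh]
      nth_rewrite 1 [hsplit h hh.le]
      have : Complex.exp (lam * h) • I h - (J h + I h)
          = (Complex.exp (lam * h) - 1) • I h - J h := by
        rw [sub_smul, one_smul]; abel
      rw [this, smul_sub, smul_smul]
    have hmain : Tendsto (fun h : ℝ => ((h:ℂ))⁻¹ • (T h (R x) - R x))
        (nhdsWithin 0 (Ioi 0)) (nhds (lam • R x - x)) := by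
      have h1 := (hphi.smul hItend).sub hpsi
      apply h1.congr'
      filter_upwards [self_mem_nhdsWithin] with h hh
      exact (hIdent h hh).symm
    refine ⟨(hA.1 (R x)).2 ⟨lam • R x - x, hmain⟩, ?_⟩
    exact tendsto_nhds_unique (hA.2 (R x) ((hA.1 (R x)).2 ⟨lam • R x - x, hmain⟩)) hmain
  refine ⟨R, ⟨fun y => (hkey y).1, fun y => ?_, fun x hx => ?_⟩, ?_⟩
  · rw [(hkey y).2]; abel
  · have hD := hA.2 x hx
    have h1 : Tendsto (fun h : ℝ => R ((h:ℂ)⁻¹ • (T h x - x)))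
        (nhdsWithin 0 (Ioi 0)) (nhds (R (A x))) := (R.continuous.tendsto _).comp hD
    have h2 : Tendsto (fun h : ℝ => ((h:ℂ))⁻¹ • (T h (R x) - R x))
        (nhdsWithin 0 (Ioi 0)) (nhds (R (A x))) := by
      apply h1.congr'
      filter_upwards [self_mem_nhdsWithin] with h hh
      rw [R.map_smul, R.map_sub, hcomm h (le_of_lt hh) x]
    have h3 : R (A x) = A (R x) :=
      tendsto_nhds_unique h2 (hA.2 (R x) (hkey x).1)
    rw [R.map_sub, R.map_smul, h3, (hkey x).2]
    abel
  · exact Rl.mkContinuous_norm_le (by positivity) hRlbound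

lemma arg_decomp (lam : ℂ) (h0 : lam ≠ 0) (ha : lam.re ≤ 0) (hb : lam.im ≠ 0) :
    |lam.arg| = Real.pi / 2 + Real.arctan ((-lam.re) / |lam.im|) := by
  have hr : 0 < ‖lam‖ := norm_pos_iff.2 h0
  have hcos : Real.cos |lam.arg| = lam.re / ‖lam‖ := by
    rw [Real.cos_abs, Complex.cos_arg h0]
  have hsin : Real.sin |lam.arg| = |lam.im| / ‖lam‖ := by
    rcases le_or_gt 0 lam.arg with h | h
    · rw [abs_of_nonneg h, Complex.sin_arg,
        abs_of_nonneg (Complex.arg_nonneg_iff.1 h)]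
    · rw [abs_of_neg h, Real.sin_neg, Complex.sin_arg,
        abs_of_neg (Complex.arg_neg_iff.1 h)]
      ring
  have hsinpos : 0 < Real.sin |lam.arg| := by
    rw [hsin]; exact div_pos (abs_pos.2 hb) hr
  have hθle : |lam.arg| ≤ Real.pi := Complex.abs_arg_le_pi lam
  have hθlt : |lam.arg| < Real.pi := by
    rcases lt_or_eq_of_le hθle with h | h
    · exact h
    · exfalso; rw [h, Real.sin_pi] at hsinpos; linarith
  have hθge : Real.pi / 2 ≤ |lam.arg| := by
    by_contra hcon
    push_neg at hcon
    have h1 : 0 < Real.cos |lam.arg| := by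
      apply Real.cos_pos_of_mem_Ioo
      constructor
      · calc -(Real.pi/2) < 0 := by linarith [Real.pi_pos]
          _ ≤ |lam.arg| := abs_nonneg _
      · exact hcon
    rw [hcos] at h1
    rcases div_pos_iff.1 h1 with h2 | h2
    · linarith [h2.1]
    · linarith [h2.2]
  set φ := |lam.arg| - Real.pi / 2 with hφdef
  have hφ0 : 0 ≤ φ := by simp [hφdef]; linarith
  have hφlt : φ < Real.pi / 2 := by simp [hφdef]; linarith
  have htan : Real.tan φ = (-lam.re) / |lam.im| := by
    rw [Real.tan_eq_sin_div_cos]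
    have h1 : Real.sin φ = -Real.cos |lam.arg| := by
      rw [show φ = -(Real.pi/2 - |lam.arg|) by ring, Real.sin_neg,
        Real.sin_pi_div_two_sub]
    have h2 : Real.cos φ = Real.sin |lam.arg| := by
      rw [show φ = -(Real.pi/2 - |lam.arg|) by ring, Real.cos_neg,
        Real.cos_pi_div_two_sub]
    rw [h1, h2, hcos, hsin]
    have hbne : |lam.im| ≠ 0 := abs_ne_zero.2 hb
    field_simp
  have harc := Real.arctan_tan (x := φ) (by linarith [Real.pi_pos]) hφlt
  rw [htan] at harc
  rw [harc, hφdef]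
  ring

lemma resolvent_unique {X : Type u} [NormedAddCommGroup X] [NormedSpace ℂ X]
    {dom : Set X} {A : X → X} {lam : ℂ} {R1 R2 : X →L[ℂ] X}
    (h1 : IsResolventAt dom A lam R1) (h2 : IsResolventAt dom A lam R2) : R1 = R2 := by
  ext y
  have h := h1.2.2 (R2 y) (h2.1 y)
  rwa [h2.2.1 y] at h

lemma resolvent_perturb {X : Type u} [NormedAddCommGroup X] [NormedSpace ℂ X] [CompleteSpace X]
    {dom : Set X} {A : X → X} {lam0 : ℂ} (mu : ℂ)
    {R : X →L[ℂ] X} (hR : IsResolventAt dom A lam0 R)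
    (h : ‖lam0 - mu‖ * ‖R‖ < 1) :
    ∃ R' : X →L[ℂ] X, IsResolventAt dom A mu R' ∧
      ∀ K : ℝ, ‖R‖ ≤ K → ‖lam0 - mu‖ * K < 1 → ‖R'‖ ≤ K / (1 - ‖lam0 - mu‖ * K) := by
  set c : ℂ := lam0 - mu with hc
  set S : X →L[ℂ] X := c • R with hSdef
  have hSnorm : ‖S‖ = ‖c‖ * ‖R‖ := norm_smul c R
  have hS : ‖S‖ < 1 := by rw [hSnorm]; exact h
  set u : (X →L[ℂ] X)ˣ := Units.oneSub S hS with hu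
  have hcomS : Commute R S := by
    show R * S = S * R
    rw [hSdef, mul_smul_comm, smul_mul_assoc]
  have hcom : Commute R (↑u⁻¹ : X →L[ℂ] X) := by
    refine Commute.units_inv_right ?_
    show R * (u : X →L[ℂ] X) = (u : X →L[ℂ] X) * R
    have : (u : X →L[ℂ] X) = 1 - S := rfl
    rw [this, mul_sub, sub_mul, one_mul, mul_one, hcomS.eq]
  refine ⟨R * (↑u⁻¹ : X →L[ℂ] X), ⟨?_, ?_, ?_⟩, ?_⟩
  · intro y
    rw [ContinuousLinearMap.mul_apply]
    exact hR.1 _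
  · intro y
    set z := (↑u⁻¹ : X →L[ℂ] X) y with hz
    rw [ContinuousLinearMap.mul_apply, ← hz]
    have h1 : A (R z) = lam0 • R z - z := by
      have := hR.2.1 z; linear_combination (norm := module) -this
    rw [h1]
    have h2 : (1 - S) z = y := by
      have h2' : ((u : X →L[ℂ] X) * (↑u⁻¹ : X →L[ℂ] X)) y = y := by
        rw [u.mul_inv]; rfl
      rw [ContinuousLinearMap.mul_apply] at h2'
      exact h2'
    have h3 : S z = c • R z := by rw [hSdef]; rfl
    calc mu • R z - (lam0 • R z - z) = z - c • R z := by
          rw [hc]; module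
      _ = (1 - S) z := by
          rw [ContinuousLinearMap.sub_apply, ContinuousLinearMap.one_apply, h3]
      _ = y := h2
  · intro x hx
    have hcomm' : (R * (↑u⁻¹ : X →L[ℂ] X)) = (↑u⁻¹ : X →L[ℂ] X) * R := hcom.eq
    rw [hcomm', ContinuousLinearMap.mul_apply]
    have h4 : R (mu • x - A x) = (1 - S) x := by
      have : mu • x - A x = (lam0 • x - A x) - c • x := by rw [hc]; module
      rw [this, _root_.map_sub, hR.2.2 x hx, R.map_smul,
        ContinuousLinearMap.sub_apply, ContinuousLinearMap.one_apply]
      rfl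
    rw [h4]
    have h7 : ((↑u⁻¹ : X →L[ℂ] X) * (u : X →L[ℂ] X)) x = x := by rw [u.inv_mul]; rfl
    rw [ContinuousLinearMap.mul_apply] at h7
    exact h7
  · intro K hK hK1
    have hKnn : (0:ℝ) ≤ K := le_trans (norm_nonneg R) hK
    have hcnn : (0:ℝ) ≤ ‖c‖ := norm_nonneg c
    have hinv : ‖(↑u⁻¹ : X →L[ℂ] X)‖ ≤ (1 - ‖S‖)⁻¹ := by
      have h5 : (↑u⁻¹ : X →L[ℂ] X) = ∑' n : ℕ, S ^ n := rfl
      rw [h5]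
      have := tsum_geometric_le_of_norm_lt_one S hS
      have h1le : ‖(1 : X →L[ℂ] X)‖ ≤ 1 := by
        rw [ContinuousLinearMap.one_def]; exact ContinuousLinearMap.norm_id_le
      linarith
    have h6 : ‖R * (↑u⁻¹ : X →L[ℂ] X)‖ ≤ ‖R‖ * ‖(↑u⁻¹ : X →L[ℂ] X)‖ := norm_mul_le _ _
    have hSK : ‖S‖ ≤ ‖c‖ * K := by rw [hSnorm]; exact mul_le_mul_of_nonneg_left hK hcnn
    have hpos : 0 < 1 - ‖c‖ * K := by linarith
    have hpos' : 0 < 1 - ‖S‖ := by linarith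
    have hmono : (1 - ‖S‖)⁻¹ ≤ (1 - ‖c‖ * K)⁻¹ := by
      apply inv_anti₀ hpos
      linarith
    calc ‖R * (↑u⁻¹ : X →L[ℂ] X)‖ ≤ ‖R‖ * ‖(↑u⁻¹ : X →L[ℂ] X)‖ := h6
      _ ≤ K * (1 - ‖c‖ * K)⁻¹ := by
          apply mul_le_mul hK (le_trans hinv hmono) (norm_nonneg _) hKnn
      _ = K / (1 - ‖c‖ * K) := by rw [div_eq_mul_inv]


end Aux

/-- Quantitative version of the classical resolvent-sector lemma:
if `A` generates a bounded `C₀`-semigroup with `‖T t‖ ≤ M` and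
`‖R(r + is, A)‖ ≤ C/|s|` for `r > 0`, `s ≠ 0`, then the open sector of angle
`π/2 + arctan (1/C)` lies in the resolvent set of `A`, and for every `q ∈ (0,1)`
and `λ` with `|arg λ| ≤ π/2 + arctan (q/C)` one has
`‖λ R(λ,A)‖ ≤ √(C² + M²)/(1 - q)`. -/
theorem stmt0 {X : Type u} [NormedAddCommGroup X] [NormedSpace ℂ X] [CompleteSpace X]
    (T : ℝ → X →L[ℂ] X) (hT : IsC0Semigroup T)
    (M : ℝ) (hM : 1 ≤ M) (hTM : ∀ t : ℝ, 0 ≤ t → ‖T t‖ ≤ M)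
    (dom : Set X) (A : X → X) (hA : IsGenerator T dom A)
    (C : ℝ) (hC : 0 < C)
    (hres : ∀ r s : ℝ, 0 < r → s ≠ 0 → ∀ R : X →L[ℂ] X,
      IsResolventAt dom A ((r : ℂ) + (s : ℂ) * Complex.I) R → ‖R‖ ≤ C / |s|) :
    (∀ lam : ℂ, lam ≠ 0 → |lam.arg| < Real.pi / 2 + Real.arctan (1 / C) →
      ∃ R : X →L[ℂ] X, IsResolventAt dom A lam R) ∧
    ∀ q : ℝ, q ∈ Set.Ioo (0 : ℝ) 1 → ∀ lam : ℂ, lam ≠ 0 →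
      |lam.arg| ≤ Real.pi / 2 + Real.arctan (q / C) →
      ∀ R : X →L[ℂ] X, IsResolventAt dom A lam R →
        ‖lam • R‖ ≤ Real.sqrt (C ^ 2 + M ^ 2) / (1 - q) := by
  constructor
  · intro lam hne hlt
    rcases lt_or_ge 0 lam.re with ha | ha
    · obtain ⟨R, hR, _⟩ := laplace hT hM hTM dom A hA lam ha
      exact ⟨R, hR⟩
    · have hb : lam.im ≠ 0 := by
        intro hb0
        have hneg : lam.re < 0 := by
          rcases lt_or_eq_of_le ha with h | h
          · exact h
          · exact absurd (Complex.ext (by simp [h]) (by simp [hb0])) hne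
        have harg : lam.arg = Real.pi := Complex.arg_eq_pi_iff.2 ⟨hneg, hb0⟩
        rw [harg, abs_of_pos Real.pi_pos] at hlt
        have := Real.arctan_lt_pi_div_two (1/C)
        linarith
      have hB : 0 < |lam.im| := abs_pos.2 hb
      have hdec := arg_decomp lam hne ha hb
      rw [hdec] at hlt
      have hratio : (-lam.re)/|lam.im| < 1/C :=
        Real.arctan_strictMono.lt_iff_lt.1 (by linarith)
      have hac : (-lam.re)*C < |lam.im| := by
        rw [div_lt_div_iff₀ hB hC] at hratio; linarith
      set ε := (|lam.im| - (-lam.re)*C)/(2*C) with hε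
      have hεpos : 0 < ε := by apply div_pos; linarith; linarith
      set lam0 : ℂ := (ε:ℂ) + (lam.im:ℂ)*Complex.I with hlam0
      have hre0 : 0 < lam0.re := by simpa [hlam0] using hεpos
      obtain ⟨R0, hR0, _⟩ := laplace hT hM hTM dom A hA lam0 hre0
      have hR0K : ‖R0‖ ≤ C / |lam.im| := hres ε lam.im hεpos hb R0 hR0
      have hdiff : lam0 - lam = ((ε - lam.re : ℝ) : ℂ) := by
        apply Complex.ext <;> simp [hlam0]
      have hnd : ‖lam0 - lam‖ = ε - lam.re := by
        rw [hdiff, Complex.norm_real, Real.norm_eq_abs, abs_of_pos (by linarith)]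
      have hεaC : (ε - lam.re)*C < |lam.im| := by
        have h1 : (ε - lam.re)*C = (|lam.im| + (-lam.re)*C)/2 := by
          rw [hε]; field_simp; ring
        rw [h1]; linarith
      have hcond : ‖lam0 - lam‖ * ‖R0‖ < 1 := by
        rw [hnd]
        calc (ε - lam.re) * ‖R0‖ ≤ (ε - lam.re) * (C/|lam.im|) :=
              mul_le_mul_of_nonneg_left hR0K (by linarith)
          _ < 1 := by
              rw [show (ε - lam.re) * (C/|lam.im|) = ((ε - lam.re)*C)/|lam.im| by ring,
                div_lt_one hB]
              exact hεaC
      obtain ⟨R', hR', _⟩ := resolvent_perturb lam hR0 hcond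
      exact ⟨R', hR'⟩
  · intro q hq lam hne harg R hRr
    obtain ⟨hq0, hq1⟩ := hq
    have h1q : (0:ℝ) < 1 - q := by linarith
    have hsqrt_le : Real.sqrt (q^2 + C^2) ≤ Real.sqrt (C^2 + M^2) := by
      apply Real.sqrt_le_sqrt; nlinarith
    have hsqrtM : M ≤ Real.sqrt (C^2 + M^2) := by
      have h' := Real.sqrt_le_sqrt (show M^2 ≤ C^2 + M^2 by nlinarith)
      rwa [Real.sqrt_sq (by linarith : (0:ℝ) ≤ M)] at h'
    rcases lt_or_ge 0 lam.re with ha | ha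
    · obtain ⟨RL, hRL, hRLn⟩ := laplace hT hM hTM dom A hA lam ha
      have hRR : R = RL := resolvent_unique hRr hRL
      rw [hRR] at *
      have hnorm : ‖lam • RL‖ = ‖lam‖ * ‖RL‖ := by
        rw [norm_smul lam RL]
      rcases eq_or_ne lam.im 0 with hb | hb
      · have hlamre : lam = ((lam.re : ℝ) : ℂ) := by
          apply Complex.ext
          · exact (Complex.ofReal_re lam.re).symm
          · simp [hb]
        have habs : ‖lam‖ = lam.re := by
          rw [hlamre, Complex.norm_real, Real.norm_eq_abs, abs_of_pos ha, Complex.ofReal_re]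
        have h1 : ‖lam • RL‖ ≤ lam.re * (M / lam.re) := by
          rw [hnorm, habs]
          exact mul_le_mul_of_nonneg_left hRLn (le_of_lt ha)
        rw [mul_div_cancel₀ _ (ne_of_gt ha)] at h1
        calc ‖lam • RL‖ ≤ M := h1
          _ ≤ Real.sqrt (C^2 + M^2) / (1 - q) := by
              rw [le_div_iff₀ h1q]
              nlinarith [Real.sqrt_nonneg (C^2 + M^2)]
      · have hRC : ‖RL‖ ≤ C/|lam.im| := by
          apply hres lam.re lam.im ha hb RL
          rwa [Complex.re_add_im]
        have hB : 0 < |lam.im| := abs_pos.2 hb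
        have habs2 : (‖lam‖)^2 = lam.re^2 + lam.im^2 := by
          rw [Complex.sq_norm, Complex.normSq_apply]; ring
        have k1 : lam.re * ‖RL‖ ≤ M := by
          rw [show M = lam.re * (M / lam.re) by rw [mul_div_cancel₀ _ (ne_of_gt ha)]]
          exact mul_le_mul_of_nonneg_left hRLn (le_of_lt ha)
        have k2 : |lam.im| * ‖RL‖ ≤ C := by
          rw [show C = |lam.im| * (C / |lam.im|) by rw [mul_div_cancel₀ _ (ne_of_gt hB)]]
          exact mul_le_mul_of_nonneg_left hRC (le_of_lt hB)
        have hsq : ‖lam • RL‖^2 ≤ C^2 + M^2 := by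
          rw [hnorm, mul_pow, habs2]
          have e1 : (lam.re^2 + lam.im^2) * ‖RL‖^2
              = (lam.re * ‖RL‖)^2 + (|lam.im| * ‖RL‖)^2 := by
            rw [mul_pow, mul_pow, sq_abs]; ring
          rw [e1]
          nlinarith [mul_nonneg (le_of_lt ha) (norm_nonneg RL),
            mul_nonneg (le_of_lt hB) (norm_nonneg RL)]
        have h2 : ‖lam • RL‖ ≤ Real.sqrt (C^2 + M^2) := by
          rw [show ‖lam • RL‖ = Real.sqrt (‖lam • RL‖^2) by
            rw [Real.sqrt_sq (norm_nonneg _)]]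
          exact Real.sqrt_le_sqrt hsq
        calc ‖lam • RL‖ ≤ Real.sqrt (C^2 + M^2) := h2
          _ ≤ Real.sqrt (C^2 + M^2) / (1 - q) := by
              rw [le_div_iff₀ h1q]
              nlinarith [Real.sqrt_nonneg (C^2 + M^2)]
    · have hb : lam.im ≠ 0 := by
        intro hb0
        have hneg : lam.re < 0 := by
          rcases lt_or_eq_of_le ha with h | h
          · exact h
          · exact absurd (Complex.ext (by simp [h]) (by simp [hb0])) hne
        have harg' : lam.arg = Real.pi := Complex.arg_eq_pi_iff.2 ⟨hneg, hb0⟩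
        rw [harg', abs_of_pos Real.pi_pos] at harg
        have := Real.arctan_lt_pi_div_two (q/C)
        linarith
      have hB : 0 < |lam.im| := abs_pos.2 hb
      have hdec := arg_decomp lam hne ha hb
      rw [hdec] at harg
      have hratio : (-lam.re)/|lam.im| ≤ q/C :=
        Real.arctan_strictMono.le_iff_le.1 (by linarith)
      have hqa : (-lam.re)*C ≤ q*|lam.im| := by
        rw [div_le_div_iff₀ hB hC] at hratio; linarith
      set K := C / |lam.im| with hK
      have hKpos : 0 < K := div_pos hC hB
      have haK : (-lam.re) * K ≤ q := by
        rw [hK, show (-lam.re)*(C/|lam.im|) = ((-lam.re)*C)/|lam.im| by ring,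
          div_le_iff₀ hB]
        linarith
      have hbound : ∀ ε : ℝ, 0 < ε → ε * K < 1 - q →
          ‖lam • R‖ ≤ ‖lam‖ * (K / (1 - (ε - lam.re)*K)) := by
        intro ε hε hεK
        set lam0 : ℂ := (ε:ℂ) + (lam.im:ℂ)*Complex.I with hlam0
        have hre0 : 0 < lam0.re := by simpa [hlam0] using hε
        obtain ⟨R0, hR0, _⟩ := laplace hT hM hTM dom A hA lam0 hre0
        have hR0K : ‖R0‖ ≤ K := hres ε lam.im hε hb R0 hR0
        have hdiff : lam0 - lam = ((ε - lam.re : ℝ) : ℂ) := by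
          apply Complex.ext <;> simp [hlam0]
        have hnd : ‖lam0 - lam‖ = ε - lam.re := by
          rw [hdiff, Complex.norm_real, Real.norm_eq_abs, abs_of_pos (by linarith)]
        have hcondK : ‖lam0 - lam‖ * K < 1 := by
          rw [hnd]
          have : (ε - lam.re)*K = ε*K + (-lam.re)*K := by ring
          rw [this]
          linarith
        have hcond : ‖lam0 - lam‖ * ‖R0‖ < 1 :=
          lt_of_le_of_lt (mul_le_mul_of_nonneg_left hR0K (norm_nonneg _)) hcondK
        obtain ⟨R', hR', hR'b⟩ := resolvent_perturb lam hR0 hcond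
        have hRR : R = R' := resolvent_unique hRr hR'
        rw [hRR]
        calc ‖lam • R'‖ = ‖lam‖ * ‖R'‖ := by
              rw [norm_smul lam R']
          _ ≤ ‖lam‖ * (K / (1 - (ε - lam.re)*K)) := by
              apply mul_le_mul_of_nonneg_left _ (norm_nonneg lam)
              have h9 := hR'b K hR0K hcondK
              rwa [hnd] at h9
      have hdenpos : 0 < 1 - (0 - lam.re)*K := by
        have : (0 - lam.re)*K = (-lam.re)*K := by ring
        rw [this]; linarith
      have hF : Tendsto (fun ε : ℝ => ‖lam‖ * (K / (1 - (ε - lam.re)*K)))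
          (nhdsWithin 0 (Set.Ioi 0)) (nhds (‖lam‖ * (K / (1 - (0 - lam.re)*K)))) := by
        apply Tendsto.mono_left _ nhdsWithin_le_nhds
        apply (ContinuousAt.tendsto _)
        apply ContinuousAt.mul continuousAt_const
        apply ContinuousAt.div continuousAt_const
        · exact (continuous_const.sub ((continuous_id.sub continuous_const).mul
            continuous_const)).continuousAt
        · exact ne_of_gt hdenpos
      have hle : ‖lam • R‖ ≤ ‖lam‖ * (K / (1 - (0 - lam.re)*K)) := by
        apply ge_of_tendsto hF
        filter_upwards [Ioo_mem_nhdsGT_of_mem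
          (Set.left_mem_Ico.2 (div_pos h1q hKpos))] with ε hε
        exact hbound ε hε.1 ((lt_div_iff₀ hKpos).1 hε.2)
      have hnum : ‖lam‖ * K ≤ Real.sqrt (q^2 + C^2) := by
        have habs2 : (‖lam‖)^2 = lam.re^2 + |lam.im|^2 := by
          rw [Complex.sq_norm, Complex.normSq_apply, sq_abs]; ring
        have hKB : K * |lam.im| = C := div_mul_cancel₀ _ (ne_of_gt hB)
        have h1 : ((-lam.re) * K)^2 ≤ q^2 :=
          pow_le_pow_left₀ (mul_nonneg (neg_nonneg.2 ha) hKpos.le) haK 2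
        have hsq : (‖lam‖ * K)^2 ≤ q^2 + C^2 := by
          have e : (‖lam‖ * K)^2 = ((-lam.re)*K)^2 + (K*|lam.im|)^2 := by
            rw [mul_pow, habs2]; ring
          rw [e, hKB]
          linarith
        rw [show ‖lam‖ * K = Real.sqrt ((‖lam‖ * K)^2) by
          rw [Real.sqrt_sq (by positivity)]]
        exact Real.sqrt_le_sqrt hsq
      calc ‖lam • R‖ ≤ ‖lam‖ * (K / (1 - (0 - lam.re)*K)) := hle
        _ = (‖lam‖ * K) / (1 - (0 - lam.re)*K) := by ring
        _ ≤ Real.sqrt (q^2 + C^2) / (1 - q) := by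
            apply div_le_div₀ (Real.sqrt_nonneg _) hnum h1q
            have : (0 - lam.re)*K = (-lam.re)*K := by ring
            rw [this]; linarith
        _ ≤ Real.sqrt (C^2 + M^2) / (1 - q) := by gcongr
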